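/- Let Q ⊆ E be closed convex, d a 1-strongly convex prox-function with Bregman distance β, g ∈ E*, λ > 0, x_k ∈ Q, and x_{k+1} = argmin_{x ∈ Q} { λ⟨g, x⟩ + β(x_k, x) }. Define φ(λ) = max_{x ∈ Q} { λ⟨g, x_k - x⟩ - β(x_k, x) }. Then for any x ∈ Q: β(x_{k+1}, x) ≤ β(x_k, x) - λ⟨g, x_k - x⟩ + φ(λ). -/

import Mathlib

/-- One-step inequality for the Bregman proximal subgradient step:
`β(x_{k+1}, x) ≤ β(x_k, x) - λ⟨g, x_k - x⟩ + φ(λ)` for all `x ∈ Q`. -/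
theorem stmt_2 {E : Type*} [NormedAddCommGroup E] [InnerProductSpace ℝ E]
    (Q : Set E) (hQc : IsClosed Q) (hQconv : Convex ℝ Q)
    (d : E → ℝ) (dg : E → E) (g : E) (lam : ℝ) (hlam : 0 < lam)
    (x0 x1 : E) (hx0 : x0 ∈ Q) (hx1 : x1 ∈ Q)
    (β : E → E → ℝ)
    (hβ : ∀ u v : E, β u v = d v - d u - (inner ℝ (dg u) (v - u) : ℝ))
    (hopt : ∀ x ∈ Q, (0:ℝ) ≤ inner ℝ (lam • g + dg x1 - dg x0) (x - x1))
    (φ : ℝ)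
    (hφ : φ = sSup {t : ℝ | ∃ x ∈ Q, t = lam * (inner ℝ g (x0 - x) : ℝ) - β x0 x})
    (hbdd : BddAbove {t : ℝ | ∃ x ∈ Q, t = lam * (inner ℝ g (x0 - x) : ℝ) - β x0 x}) :
    ∀ x ∈ Q, β x1 x ≤ β x0 x - lam * (inner ℝ g (x0 - x) : ℝ) + φ := by
  intro x hx
  have hmem : lam * (inner ℝ g (x0 - x1) : ℝ) - β x0 x1 ≤ φ := by
    rw [hφ]
    exact le_csSup hbdd ⟨x1, hx1, rfl⟩
  have hk := hopt x hx
  simp only [hβ, inner_add_left, inner_sub_left, inner_sub_right, real_inner_smul_left] at *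
  nlinarith [hk, hmem]
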